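/- For a probability measure μ on (0,1] and integrable random variable Z, define h(z) = ∫₀¹ [F_Z^{-1}(α) + (1/α)·min(z − F_Z^{-1}(α), 0)] μ(dα). Then E[h(Z)] = ∫₀¹ CVaR_α(Z) μ(dα), i.e., the function h attains the spectral risk measure value in expectation. -/

import Mathlib

open MeasureTheory Set

noncomputable section

lemma aux_g_nonneg {a c z : ℝ} (h1 : 1 ≤ a⁻¹) :
    0 ≤ z - (c + a⁻¹ * min (z - c) 0) := by
  rcases le_total (z - c) 0 with h | h
  · rw [min_eq_left h]; nlinarith
  · rw [min_eq_right h]; nlinarith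

lemma aux_g_lip1 {a c z1 z2 : ℝ} (h1 : 1 ≤ a⁻¹) (hz : z1 ≤ z2) :
    z2 - (c + a⁻¹ * min (z2 - c) 0) ≤ (z1 - (c + a⁻¹ * min (z1 - c) 0)) + (z2 - z1) := by
  rcases le_total (z1 - c) 0 with h | h <;> rcases le_total (z2 - c) 0 with h' | h' <;>
    simp only [min_eq_left, min_eq_right, h, h'] <;> nlinarith

lemma aux_g_lip2 {a b c z1 z2 : ℝ} (h1 : 1 ≤ a⁻¹) (hb : 0 < b)
    (hcase : c ≤ z1 ∨ a⁻¹ ≤ b⁻¹) (hz : z1 ≤ z2) :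
    z1 - (c + a⁻¹ * min (z1 - c) 0) ≤ (z2 - (c + a⁻¹ * min (z2 - c) 0)) + b⁻¹ * (z2 - z1) := by
  have hb' : 0 < b⁻¹ := by positivity
  rcases hcase with hc | hc
  · rw [min_eq_right (by linarith), min_eq_right (by linarith)]; nlinarith
  · rcases le_total (z1 - c) 0 with h | h <;> rcases le_total (z2 - c) 0 with h' | h' <;>
      simp only [min_eq_left, min_eq_right, h, h'] <;> nlinarith

lemma aux_min_int {Ω : Type*} [MeasurableSpace Ω] {P : Measure Ω} [IsFiniteMeasure P]
    {Z : Ω → ℝ} (hZ : Integrable Z P) (c : ℝ) :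
    Integrable (fun ω => min (Z ω - c) 0) P := by
  have h : ∀ x : ℝ, min (x - c) 0 = ((x - c) - |x - c|) / 2 := by
    intro x
    rcases le_total (x - c) 0 with h | h
    · rw [min_eq_left h, abs_of_nonpos h]; ring
    · rw [min_eq_right h, abs_of_nonneg h]; ring
  simp only [h]
  exact (((hZ.sub (integrable_const c)).sub (hZ.sub (integrable_const c)).abs).div_const 2)


/-- For h(z) = ∫₀¹ [F_Z⁻¹(α) + (1/α) min(z − F_Z⁻¹(α), 0)] μ(dα),
E[h(Z)] = ∫₀¹ CVaR_α(Z) μ(dα), where CVaR is in Rockafellar–Uryasev form. -/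
theorem stmt2 {Ω : Type*} [MeasurableSpace Ω] (P : Measure Ω) [IsProbabilityMeasure P]
    (Z : Ω → ℝ) (hZm : Measurable Z) (hZ : Integrable Z P)
    (μ : Measure ℝ) [IsProbabilityMeasure μ] (hsupp : μ (Set.Ioc (0:ℝ) 1)ᶜ = 0)
    (q : ℝ → ℝ) (hq : ∀ u, q u = sInf {z | u ≤ (P {ω | Z ω ≤ z}).toReal})
    (cvar : ℝ → ℝ)
    (hcvar : ∀ α, cvar α = q α + α⁻¹ * ∫ ω, min (Z ω - q α) 0 ∂P)
    (h : ℝ → ℝ)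
    (hh : ∀ z, h z = ∫ α in Set.Ioc (0:ℝ) 1, (q α + α⁻¹ * min (z - q α) 0) ∂μ) :
    ∫ ω, h (Z ω) ∂P = ∫ α in Set.Ioc (0:ℝ) 1, cvar α ∂μ := by
  set F : ℝ → ℝ := fun z => (P {ω | Z ω ≤ z}).toReal with hF
  -- monotonicity of F
  have hFmono : Monotone F := by
    intro a b hab
    exact ENNReal.toReal_mono (measure_ne_top _ _)
      (measure_mono (fun ω (hω : Z ω ≤ a) => le_trans hω hab))
  -- bddBelow
  have hbdd : ∀ u : ℝ, 0 < u → BddBelow {z | u ≤ F z} := by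
    intro u hu
    have hT : Filter.Tendsto (fun n : ℕ => P {ω | Z ω ≤ -(n:ℝ)}) Filter.atTop
        (nhds (P (⋂ n : ℕ, {ω | Z ω ≤ -(n:ℝ)}))) := by
      refine tendsto_measure_iInter_atTop
        (fun i => (hZm measurableSet_Iic).nullMeasurableSet) ?_ ⟨0, measure_ne_top _ _⟩
      intro m n hmn ω (hω : Z ω ≤ -(n:ℝ))
      exact le_trans hω (by exact_mod_cast neg_le_neg (Nat.cast_le.mpr hmn))
    have hempty : (⋂ n : ℕ, {ω | Z ω ≤ -(n:ℝ)}) = ∅ := by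
      ext ω
      simp only [mem_iInter, mem_setOf_eq, mem_empty_iff_false, iff_false, not_forall, not_le]
      obtain ⟨n, hn⟩ := exists_nat_gt (-Z ω)
      exact ⟨n, by linarith⟩
    rw [hempty, measure_empty] at hT
    obtain ⟨n, hn⟩ := (hT.eventually_lt_const
      (by simpa using ENNReal.ofReal_pos.mpr hu : (0 : ENNReal) < ENNReal.ofReal u)).exists
    refine ⟨-(n:ℝ), fun z hz => ?_⟩
    by_contra hzn
    push_neg at hzn
    have h1 : P {ω | Z ω ≤ z} < ENNReal.ofReal u :=
      lt_of_le_of_lt (measure_mono (fun ω (hω : Z ω ≤ z) => le_of_lt (lt_of_le_of_lt hω hzn))) hn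
    have h2 : F z < u := by
      have := (ENNReal.toReal_lt_toReal (measure_ne_top _ _) ENNReal.ofReal_ne_top).mpr h1
      rwa [ENNReal.toReal_ofReal hu.le] at this
    exact absurd hz (by simp only [mem_setOf_eq]; linarith)
  -- nonempty
  have hne : ∀ u : ℝ, 0 < u → u < 1 → {z | u ≤ F z}.Nonempty := by
    intro u hu0 hu
    have hT : Filter.Tendsto (fun n : ℕ => P {ω | Z ω ≤ (n:ℝ)}) Filter.atTop
        (nhds (P (⋃ n : ℕ, {ω | Z ω ≤ (n:ℝ)}))) := by
      refine tendsto_measure_iUnion_atTop ?_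
      intro m n hmn ω (hω : Z ω ≤ (m:ℝ))
      exact le_trans hω (by exact_mod_cast hmn)
    have huniv : (⋃ n : ℕ, {ω | Z ω ≤ (n:ℝ)}) = univ := by
      ext ω
      simp only [mem_iUnion, mem_setOf_eq, mem_univ, iff_true]
      obtain ⟨n, hn⟩ := exists_nat_gt (Z ω)
      exact ⟨n, hn.le⟩
    rw [huniv, measure_univ] at hT
    obtain ⟨n, hn⟩ := (hT.eventually_const_lt (ENNReal.ofReal_lt_one.mpr hu)).exists
    refine ⟨(n:ℝ), ?_⟩
    simp only [mem_setOf_eq, hF]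
    calc u = (ENNReal.ofReal u).toReal := (ENNReal.toReal_ofReal hu0.le).symm
      _ ≤ (P {ω | Z ω ≤ (n:ℝ)}).toReal :=
            ENNReal.toReal_mono (measure_ne_top _ _) hn.le
  -- quantile below
  have hqle : ∀ u : ℝ, 0 < u → ∀ z : ℝ, u ≤ F z → q u ≤ z := by
    intro u hu z hz
    rw [hq u]
    exact csInf_le (hbdd u hu) hz
  -- monotone on Ioo
  have hqmono : MonotoneOn q (Ioo (0:ℝ) 1) := by
    intro a ha b hb hab
    rw [hq a, hq b]
    exact csInf_le_csInf (hbdd a ha.1) (hne b hb.1 hb.2) (fun z hz => le_trans hab hz)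
  -- the restricted measure
  set ν : Measure ℝ := μ.restrict (Set.Ioc (0:ℝ) 1) with hν
  have hIoc : μ (Set.Ioc (0:ℝ) 1) = 1 := by
    have h1 := measure_add_measure_compl (μ := μ) (measurableSet_Ioc (a := (0:ℝ)) (b := 1))
    rw [hsupp, add_zero, measure_univ] at h1
    exact h1
  haveI : IsProbabilityMeasure ν := ⟨by rw [hν, Measure.restrict_apply_univ]; exact hIoc⟩
  -- a.e. measurability of q on ν
  have hqae : AEMeasurable q ν := by
    have h1 : Ioo (0:ℝ) 1 ∪ {1} = Ioc (0:ℝ) 1 := Set.Ioo_union_right zero_lt_one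
    rw [hν, ← h1, Measure.restrict_union (by simp) (measurableSet_singleton 1)]
    refine aemeasurable_add_measure_iff.mpr
      ⟨aemeasurable_restrict_of_monotoneOn measurableSet_Ioo hqmono, ?_⟩
    refine (aemeasurable_const (b := q 1)).congr ?_
    have hnull : μ.restrict {(1:ℝ)} ({(1:ℝ)}ᶜ) = 0 := by
      rw [Measure.restrict_apply (measurableSet_singleton (1:ℝ)).compl]
      simp
    exact measure_mono_null (fun x hx => by
      simp only [mem_compl_iff, mem_singleton_iff]
      intro hx1
      exact hx (by simp only [mem_setOf_eq, hx1])) hnull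
  -- basic facts about α in Ioc
  have hinv : ∀ a : ℝ, a ∈ Ioc (0:ℝ) 1 → 1 ≤ a⁻¹ := by
    intro a ha
    rw [le_inv_comm₀ one_pos ha.1]
    simpa using ha.2
  have haec : ∀ᵐ a ∂ν, a ∈ Ioc (0:ℝ) 1 := by
    rw [hν]; exact ae_restrict_mem measurableSet_Ioc
  -- integrability in ω for each α
  have hfint : ∀ a : ℝ, Integrable (fun ω => q a + a⁻¹ * min (Z ω - q a) 0) P :=
    fun a => (integrable_const (q a)).add ((aux_min_int hZ (q a)).const_mul _)
  have hfPint : ∀ a : ℝ, ∫ ω, (q a + a⁻¹ * min (Z ω - q a) 0) ∂P = cvar a := by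
    intro a
    rw [integral_add (integrable_const _) ((aux_min_int hZ (q a)).const_mul _),
      integral_const, integral_const_mul, hcvar a]
    simp
  have hgint : ∀ a : ℝ, Integrable (fun ω => Z ω - (q a + a⁻¹ * min (Z ω - q a) 0)) P :=
    fun a => hZ.sub (hfint a)
  have hgPint : ∀ a : ℝ, ∫ ω, (Z ω - (q a + a⁻¹ * min (Z ω - q a) 0)) ∂P
      = (∫ ω, Z ω ∂P) - cvar a := by
    intro a
    rw [integral_sub hZ (hfint a), hfPint a]
  -- product-measure a.e. measurability
  have hfaem : AEMeasurable (fun p : ℝ × Ω => q p.1 + p.1⁻¹ * min (Z p.2 - q p.1) 0)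
      (ν.prod P) := by
    refine hqae.comp_fst.add ((measurable_fst.inv.aemeasurable).mul ?_)
    exact (((hZm.comp measurable_snd).aemeasurable.sub hqae.comp_fst).min aemeasurable_const)
  have hgaem : AEMeasurable (fun p : ℝ × Ω => Z p.2 - (q p.1 + p.1⁻¹ * min (Z p.2 - q p.1) 0))
      (ν.prod P) := (hZm.comp measurable_snd).aemeasurable.sub hfaem
  -- a.e. on the product, the first coordinate is in Ioc 0 1
  have haecp : ∀ᵐ p : ℝ × Ω ∂(ν.prod P), p.1 ∈ Ioc (0:ℝ) 1 := by
    have hnull : (ν.prod P) ((Ioc (0:ℝ) 1)ᶜ ×ˢ (univ : Set Ω)) = 0 := by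
      rw [Measure.prod_prod]
      have : ν ((Ioc (0:ℝ) 1)ᶜ) = 0 := by
        rw [hν, Measure.restrict_apply measurableSet_Ioc.compl]
        simp
      rw [this, zero_mul]
    refine measure_mono_null (fun p hp => ?_) hnull
    exact ⟨hp, mem_univ _⟩
  -- Tonelli
  set G : ℝ × Ω → ENNReal :=
    fun p => ENNReal.ofReal (Z p.2 - (q p.1 + p.1⁻¹ * min (Z p.2 - q p.1) 0)) with hG
  have hGaem : AEMeasurable G (ν.prod P) := hgaem.ennreal_ofReal
  set φ : ℝ → ENNReal :=
    fun z => ∫⁻ a, ENNReal.ofReal (z - (q a + a⁻¹ * min (z - q a) 0)) ∂ν with hφ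
  have hIω : ∫⁻ p, G p ∂(ν.prod P) = ∫⁻ ω, φ (Z ω) ∂P := by
    rw [MeasureTheory.lintegral_prod_symm G hGaem]
  have hIα : ∫⁻ p, G p ∂(ν.prod P)
      = ∫⁻ a, ENNReal.ofReal ((∫ ω, Z ω ∂P) - cvar a) ∂ν := by
    rw [MeasureTheory.lintegral_prod G hGaem]
    refine lintegral_congr_ae (haec.mono fun a ha => ?_)
    simp only [hG]
    rw [← hgPint a]
    exact (ofReal_integral_eq_lintegral_ofReal (hgint a)
      (Filter.Eventually.of_forall fun ω => aux_g_nonneg (hinv a ha))).symm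
  by_cases hfin : ∫⁻ p, G p ∂(ν.prod P) ≠ ⊤
  · -- finite case: Fubini
    have hgprod : Integrable
        (fun p : ℝ × Ω => Z p.2 - (q p.1 + p.1⁻¹ * min (Z p.2 - q p.1) 0)) (ν.prod P) := by
      refine ⟨hgaem.aestronglyMeasurable, ?_⟩
      rw [hasFiniteIntegral_iff_ofReal (haecp.mono fun p hp => aux_g_nonneg (hinv _ hp))]
      exact lt_of_le_of_ne le_top hfin
    have hmap : (ν.prod P).map Prod.snd = P := by
      rw [Measure.map_snd_prod, measure_univ, one_smul]
    have hZP : Integrable Z ((ν.prod P).map Prod.snd) := by rw [hmap]; exact hZ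
    have hZprod : Integrable (fun p : ℝ × Ω => Z p.2) (ν.prod P) :=
      (integrable_map_measure (by rw [hmap]; exact hZ.aestronglyMeasurable)
        measurable_snd.aemeasurable).mp hZP
    have hfprod : Integrable
        (fun p : ℝ × Ω => q p.1 + p.1⁻¹ * min (Z p.2 - q p.1) 0) (ν.prod P) :=
      (hZprod.sub hgprod).congr (Filter.Eventually.of_forall fun p => by simp only [Pi.sub_apply]; ring)
    have hswap := integral_integral_swap (μ := ν) (ν := P)
      (f := fun a ω => q a + a⁻¹ * min (Z ω - q a) 0) hfprod
    simp only [hh]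
    rw [← hswap]
    refine integral_congr_ae (haec.mono fun a _ => ?_)
    exact hfPint a
  · push_neg at hfin
    -- RHS is a junk integral, equal to 0
    have hcvar_not : ¬ Integrable cvar ν := by
      intro hcv
      have h1 : Integrable (fun a => (∫ ω, Z ω ∂P) - cvar a) ν := (integrable_const _).sub hcv
      have h2 : 0 ≤ᵐ[ν] fun a => (∫ ω, Z ω ∂P) - cvar a := by
        refine haec.mono fun a ha => ?_
        simp only [Pi.zero_apply]
        rw [← hgPint a]
        exact integral_nonneg fun ω => aux_g_nonneg (hinv a ha)
      have h3 := ofReal_integral_eq_lintegral_ofReal h1 h2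
      rw [← hIα, hfin] at h3
      exact absurd h3 (by simp)
    have hRHS : ∫ a, cvar a ∂ν = 0 := integral_undef hcvar_not
    -- pointwise-in-z facts
    have hmeasz : ∀ z : ℝ, AEMeasurable (fun a => q a + a⁻¹ * min (z - q a) 0) ν := by
      intro z
      exact hqae.add ((measurable_inv.aemeasurable).mul
        ((aemeasurable_const.sub hqae).min aemeasurable_const))
    have hz_nonneg : ∀ z : ℝ, 0 ≤ᵐ[ν] fun a => z - (q a + a⁻¹ * min (z - q a) 0) :=
      fun z => haec.mono fun a ha => aux_g_nonneg (hinv a ha)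
    have hz_fin : ∀ z : ℝ, φ z ≠ ⊤ → h z = z - (φ z).toReal := by
      intro z hzf
      have hgz_int : Integrable (fun a => z - (q a + a⁻¹ * min (z - q a) 0)) ν := by
        refine ⟨(aemeasurable_const.sub (hmeasz z)).aestronglyMeasurable, ?_⟩
        rw [hasFiniteIntegral_iff_ofReal (hz_nonneg z)]
        exact lt_of_le_of_ne le_top hzf
      have e0 : ∀ a : ℝ, q a + a⁻¹ * min (z - q a) 0 = z - (z - (q a + a⁻¹ * min (z - q a) 0)) :=
        fun a => by ring
      rw [hh z]
      calc ∫ a, (q a + a⁻¹ * min (z - q a) 0) ∂ν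
          = ∫ a, (z - (z - (q a + a⁻¹ * min (z - q a) 0))) ∂ν := by
            exact integral_congr_ae (Filter.Eventually.of_forall fun a => e0 a)
        _ = (∫ _, z ∂ν) - ∫ a, (z - (q a + a⁻¹ * min (z - q a) 0)) ∂ν :=
            integral_sub (integrable_const z) hgz_int
        _ = z - (φ z).toReal := by
            rw [integral_const, probReal_univ, one_smul,
              integral_eq_lintegral_of_nonneg_ae (hz_nonneg z)
                (aemeasurable_const.sub (hmeasz z)).aestronglyMeasurable, hφ]
    have hz_inf : ∀ z : ℝ, φ z = ⊤ → h z = 0 := by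
      intro z hzt
      rw [hh z]
      apply integral_undef
      intro hint
      have hgz_int : Integrable (fun a => z - (q a + a⁻¹ * min (z - q a) 0)) ν :=
        (integrable_const z).sub hint
      have := ofReal_integral_eq_lintegral_ofReal hgz_int (hz_nonneg z)
      rw [show ∫⁻ a, ENNReal.ofReal (z - (q a + a⁻¹ * min (z - q a) 0)) ∂ν = φ z from rfl,
        hzt] at this
      exact absurd this (by simp)
    -- comparison lemmas for φ
    have key1 : ∀ z z' : ℝ, z ≤ z' → φ z' ≤ φ z + ENNReal.ofReal (z' - z) := by
      intro z z' hzz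
      rw [hφ]
      calc ∫⁻ a, ENNReal.ofReal (z' - (q a + a⁻¹ * min (z' - q a) 0)) ∂ν
          ≤ ∫⁻ a, (ENNReal.ofReal (z - (q a + a⁻¹ * min (z - q a) 0))
              + ENNReal.ofReal (z' - z)) ∂ν := by
            refine lintegral_mono_ae (haec.mono fun a ha => ?_)
            rw [← ENNReal.ofReal_add (aux_g_nonneg (hinv a ha)) (by linarith)]
            exact ENNReal.ofReal_le_ofReal (aux_g_lip1 (hinv a ha) hzz)
        _ = φ z + ENNReal.ofReal (z' - z) := by
            rw [lintegral_add_right _ measurable_const, lintegral_const, measure_univ, mul_one,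
              hφ]
    have key2 : ∀ z z' : ℝ, z ≤ z' → ∀ b : ℝ, 0 < b → b ≤ F z →
        φ z ≤ φ z' + ENNReal.ofReal (b⁻¹ * (z' - z)) := by
      intro z z' hzz b hb hbF
      rw [hφ]
      calc ∫⁻ a, ENNReal.ofReal (z - (q a + a⁻¹ * min (z - q a) 0)) ∂ν
          ≤ ∫⁻ a, (ENNReal.ofReal (z' - (q a + a⁻¹ * min (z' - q a) 0))
              + ENNReal.ofReal (b⁻¹ * (z' - z))) ∂ν := by
            refine lintegral_mono_ae (haec.mono fun a ha => ?_)
            rw [← ENNReal.ofReal_add (aux_g_nonneg (hinv a ha)) (mul_nonneg (by positivity) (by linarith))]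
            refine ENNReal.ofReal_le_ofReal
              (aux_g_lip2 (hinv a ha) hb ?_ hzz)
            rcases le_or_gt a b with hab | hab
            · exact Or.inl (hqle a ha.1 z (le_trans hab hbF))
            · exact Or.inr (by gcongr)
        _ = φ z' + ENNReal.ofReal (b⁻¹ * (z' - z)) := by
            rw [lintegral_add_right _ measurable_const, lintegral_const, measure_univ, mul_one,
              hφ]
    -- the set where φ is infinite
    by_cases hex : ∃ z2 : ℝ, φ z2 ≠ ⊤
    · obtain ⟨z2, hz2⟩ := hex
      have hSlt : ∀ z : ℝ, φ z = ⊤ → z < z2 := by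
        intro z hzt
        by_contra hc
        push_neg at hc
        have := key1 z2 z hc
        rw [hzt, top_le_iff] at this
        exact absurd this (ENNReal.add_ne_top.mpr ⟨hz2, ENNReal.ofReal_ne_top⟩)
      have hSF : ∀ z : ℝ, φ z = ⊤ → F z = 0 := by
        intro z hzt
        by_contra hFz
        have hFpos : 0 < F z := lt_of_le_of_ne ENNReal.toReal_nonneg (Ne.symm hFz)
        have := key2 z z2 (hSlt z hzt).le (F z) hFpos le_rfl
        rw [hzt, top_le_iff] at this
        exact absurd this (ENNReal.add_ne_top.mpr ⟨hz2, ENNReal.ofReal_ne_top⟩)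
      have hFz0 : ∀ z : ℝ, F z = 0 → P {ω | Z ω ≤ z} = 0 := by
        intro z hFz
        rcases (ENNReal.toReal_eq_zero_iff _).mp hFz with h0 | h0
        · exact h0
        · exact absurd h0 (measure_ne_top _ _)
      have hdown : ∀ z : ℝ, φ z = ⊤ → ∀ z' : ℝ, z' ≤ z → φ z' = ⊤ := by
        intro z hz z' hz'
        by_contra hne'
        have := key1 z' z hz'
        rw [hz, top_le_iff] at this
        exact absurd this (ENNReal.add_ne_top.mpr ⟨hne', ENNReal.ofReal_ne_top⟩)
      have hae_fin : ∀ᵐ ω ∂P, φ (Z ω) ≠ ⊤ := by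
        by_cases hSne : ∃ z0 : ℝ, φ z0 = ⊤
        · obtain ⟨z0, hz0⟩ := hSne
          have hbddS : BddAbove {z : ℝ | φ z = ⊤} := ⟨z2, fun z hz => (hSlt z hz).le⟩
          have hSne' : {z : ℝ | φ z = ⊤}.Nonempty := ⟨z0, hz0⟩
          set m := sSup {z : ℝ | φ z = ⊤} with hm
          by_cases hmS : φ m = ⊤
          · have hnull : P {ω | Z ω ≤ m} = 0 := hFz0 m (hSF m hmS)
            rw [ae_iff]
            refine measure_mono_null ?_ hnull
            intro ω hω
            simp only [not_not, mem_setOf_eq] at hω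
            exact le_csSup hbddS hω
          · have hmem : ∀ n : ℕ, φ (m - 1/(n+1)) = ⊤ := by
              intro n
              have hlt : m - 1/((n:ℝ)+1) < m := by
                have : (0:ℝ) < 1/((n:ℝ)+1) := by positivity
                linarith
              obtain ⟨z, hzS, hzgt⟩ := exists_lt_of_lt_csSup hSne' hlt
              exact hdown z hzS _ hzgt.le
            have hnull : P (⋃ n : ℕ, {ω | Z ω ≤ m - 1/((n:ℝ)+1)}) = 0 :=
              measure_iUnion_null fun n => hFz0 _ (hSF _ (hmem n))
            rw [ae_iff]
            refine measure_mono_null ?_ hnull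
            intro ω hω
            simp only [not_not, mem_setOf_eq] at hω
            have hle : Z ω ≤ m := le_csSup hbddS hω
            have hlt : Z ω < m := lt_of_le_of_ne hle (fun he => hmS (he ▸ hω))
            obtain ⟨n, hn⟩ := exists_nat_one_div_lt (show (0:ℝ) < m - Z ω by linarith)
            exact mem_iUnion.mpr ⟨n, by simp only [mem_setOf_eq]; linarith⟩
        · push_neg at hSne
          exact Filter.Eventually.of_forall fun ω => hSne _
      have hae_h : ∀ᵐ ω ∂P, h (Z ω) = Z ω - (φ (Z ω)).toReal :=
        hae_fin.mono fun ω hω => hz_fin _ hω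
      have hnotint : ¬ Integrable (fun ω => h (Z ω)) P := by
        intro hint
        have hWint : Integrable (fun ω => Z ω - h (Z ω)) P := hZ.sub hint
        have hWeq : (fun ω => Z ω - h (Z ω)) =ᵐ[P] fun ω => (φ (Z ω)).toReal :=
          hae_h.mono fun ω hω => by simp only; rw [hω]; ring
        have hW2 : Integrable (fun ω => (φ (Z ω)).toReal) P := hWint.congr hWeq
        have h1 := ofReal_integral_eq_lintegral_ofReal hW2
          (Filter.Eventually.of_forall fun ω => ENNReal.toReal_nonneg)
        have h2 : ∫⁻ ω, ENNReal.ofReal ((φ (Z ω)).toReal) ∂P = ∫⁻ ω, φ (Z ω) ∂P :=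
          lintegral_congr_ae (hae_fin.mono fun ω hω => ENNReal.ofReal_toReal hω)
        rw [h2, ← hIω, hfin] at h1
        exact absurd h1 (by simp)
      rw [hRHS, integral_undef hnotint]
    · push_neg at hex
      have hzero : ∀ ω, h (Z ω) = 0 := fun ω => hz_inf _ (hex _)
      rw [hRHS]
      simp only [hzero]
      exact integral_zero _ _
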